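/- Let $v_1,\dots,v_N \in \mathbb{R}^d$ and let $d_V := \max_{1\le i,j\le N} |v_i - v_j|$. Fix $0 < \kappa \le 1/N$ and define $\Omega_\kappa := \{ \sum_{i=1}^N \psi_i v_i : \psi_i \ge \kappa \text{ for all } i, \ \sum_{i=1}^N \psi_i = 1\}$. Then for any two elements $w_1, w_2 \in \Omega_\kappa$ one has $|w_1 - w_2| \le (1 - \kappa N)\, d_V$. -/

import Mathlib

theorem stmt_0 {d N : ℕ} (hN : 1 ≤ N) (v : Fin N → EuclideanSpace ℝ (Fin d))
    (κ : ℝ) (hκ : 0 < κ) (hκN : κ ≤ 1 / N)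
    (dV : ℝ) (hdV : dV = ⨆ i : Fin N, ⨆ j : Fin N, ‖v i - v j‖)
    (w₁ w₂ : EuclideanSpace ℝ (Fin d))
    (hw₁ : ∃ ψ : Fin N → ℝ, (∀ i, κ ≤ ψ i) ∧ (∑ i, ψ i) = 1 ∧ w₁ = ∑ i, ψ i • v i)
    (hw₂ : ∃ ψ : Fin N → ℝ, (∀ i, κ ≤ ψ i) ∧ (∑ i, ψ i) = 1 ∧ w₂ = ∑ i, ψ i • v i) :
    ‖w₁ - w₂‖ ≤ (1 - κ * N) * dV := by
  obtain ⟨ψ, hψκ, hψ1, hw1⟩ := hw₁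
  obtain ⟨φ, hφκ, hφ1, hw2⟩ := hw₂
  haveI : Nonempty (Fin N) := ⟨⟨0, hN⟩⟩
  have hNpos : (0 : ℝ) < N := by exact_mod_cast Nat.lt_of_lt_of_le Nat.zero_lt_one hN
  set s : ℝ := 1 - κ * N with hs
  have hd : ∀ i j : Fin N, ‖v i - v j‖ ≤ dV := by
    intro i j
    rw [hdV]
    calc ‖v i - v j‖ ≤ ⨆ j, ‖v i - v j‖ := le_ciSup (f := fun j => ‖v i - v j‖) (Set.finite_range _).bddAbove j
      _ ≤ ⨆ i, ⨆ j, ‖v i - v j‖ :=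
        le_ciSup (f := fun i => ⨆ j, ‖v i - v j‖) (Set.finite_range _).bddAbove i
  have hdV0 : 0 ≤ dV := by simpa using hd ⟨0, hN⟩ ⟨0, hN⟩
  set a : Fin N → ℝ := fun i => ψ i - κ with ha
  set b : Fin N → ℝ := fun i => φ i - κ with hb
  have ha0 : ∀ i, 0 ≤ a i := fun i => sub_nonneg.2 (hψκ i)
  have hb0 : ∀ i, 0 ≤ b i := fun i => sub_nonneg.2 (hφκ i)
  have hκconst : ∑ _i : Fin N, κ = κ * N := by
    simp [Finset.sum_const, mul_comm]
  have hsa : ∑ i, a i = s := by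
    simp only [ha, Finset.sum_sub_distrib, hψ1, hκconst, hs]
  have hsb : ∑ i, b i = s := by
    simp only [hb, Finset.sum_sub_distrib, hφ1, hκconst, hs]
  have hs0 : 0 ≤ s := by
    have h1 : κ * N ≤ 1 := (le_div_iff₀ hNpos).mp hκN
    simp [hs, h1]
  have hw : w₁ - w₂ = (∑ i, a i • v i) - ∑ i, b i • v i := by
    rw [hw1, hw2]
    simp only [ha, hb, sub_smul, Finset.sum_sub_distrib]
    abel
  rcases eq_or_lt_of_le hs0 with h0 | hspos
  · have haz : ∀ i ∈ Finset.univ, a i = 0 :=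
      (Finset.sum_eq_zero_iff_of_nonneg (fun i _ => ha0 i)).1 (hsa.trans h0.symm)
    have hbz : ∀ i ∈ Finset.univ, b i = 0 :=
      (Finset.sum_eq_zero_iff_of_nonneg (fun i _ => hb0 i)).1 (hsb.trans h0.symm)
    have hzero : w₁ - w₂ = 0 := by
      rw [hw, Finset.sum_eq_zero fun i hi => by rw [haz i hi, zero_smul],
        Finset.sum_eq_zero fun i hi => by rw [hbz i hi, zero_smul], sub_zero]
    rw [hzero, norm_zero, ← h0, zero_mul]
  · have key : s • (w₁ - w₂) = ∑ i, ∑ j, (a i * b j) • (v i - v j) := by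
      have h1 : ∑ i, ∑ j, (a i * b j) • (v i - v j)
          = (∑ i : Fin N, ∑ j : Fin N, (a i * b j) • v i)
            - ∑ i : Fin N, ∑ j : Fin N, (a i * b j) • v j := by
        simp [smul_sub, Finset.sum_sub_distrib]
      have h2 : ∑ i : Fin N, ∑ j : Fin N, (a i * b j) • v i = ∑ i, (a i * s) • v i := by
        refine Finset.sum_congr rfl fun i _ => ?_
        rw [← Finset.sum_smul, ← Finset.mul_sum, hsb]
      have h3 : ∑ i : Fin N, ∑ j : Fin N, (a i * b j) • v j = ∑ j, (s * b j) • v j := by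
        rw [Finset.sum_comm]
        refine Finset.sum_congr rfl fun j _ => ?_
        rw [← Finset.sum_smul, ← Finset.sum_mul, hsa]
      rw [h1, h2, h3, hw, smul_sub, Finset.smul_sum, Finset.smul_sum]
      congr 1
      · exact Finset.sum_congr rfl fun i _ => by rw [smul_smul, mul_comm]
      · exact Finset.sum_congr rfl fun i _ => by rw [smul_smul]
    have hnorm : s * ‖w₁ - w₂‖ ≤ s * (s * dV) := by
      calc s * ‖w₁ - w₂‖ = ‖s • (w₁ - w₂)‖ := by
            rw [norm_smul, Real.norm_eq_abs, abs_of_pos hspos]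
        _ = ‖∑ i, ∑ j, (a i * b j) • (v i - v j)‖ := by rw [key]
        _ ≤ ∑ i, ∑ j, ‖(a i * b j) • (v i - v j)‖ :=
            le_trans (norm_sum_le _ _) (Finset.sum_le_sum fun i _ => norm_sum_le _ _)
        _ ≤ ∑ i, ∑ j, (a i * b j) * dV := by
            refine Finset.sum_le_sum fun i _ => Finset.sum_le_sum fun j _ => ?_
            rw [norm_smul, Real.norm_eq_abs, abs_of_nonneg (mul_nonneg (ha0 i) (hb0 j))]
            exact mul_le_mul_of_nonneg_left (hd i j) (mul_nonneg (ha0 i) (hb0 j))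
        _ = s * (s * dV) := by
            calc ∑ i, ∑ j, (a i * b j) * dV = ∑ i, a i * ∑ j, b j * dV := by
                  refine Finset.sum_congr rfl fun i _ => ?_
                  rw [Finset.mul_sum]
                  exact Finset.sum_congr rfl fun j _ => by ring
              _ = (∑ i, a i) * ∑ j, b j * dV := by rw [← Finset.sum_mul]
              _ = s * (s * dV) := by rw [hsa, ← Finset.sum_mul, hsb]
    exact (mul_le_mul_iff_right₀ hspos).mp hnorm
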